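/- Let k be odd with k ≥ 3N for an odd N, and define the graph D_k on vertex set {0,...,k-1} where (u,v) is an edge iff the distance between u and v in the cycle C_k is odd and at most N (equivalently, u and v are joined by a walk of length exactly N in C_k). Then for every n and all coefficients c_1,...,c_n ∈ ℤ with Σ|c_i| ≤ N and Σ c_i odd, the function f'(x_1,...,x_n) = (Σ c_i x_i) mod k is a graph homomorphism from C_k^n to D_k. -/
import Mathlib

/-- Adjacency in the `m`-cycle on vertex set `ZMod m`. -/
def CycAdj (m : ℕ) (u v : ZMod m) : Prop := v = u + 1 ∨ v = u - 1

/-- The distance between two vertices of the cycle `C_k`. -/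
def cdist (k : ℕ) (u v : ZMod k) : ℕ := min (u - v).val (v - u).val

/-- Adjacency in the auxiliary graph `D_k`: `u` and `v` are adjacent iff their distance in
the cycle `C_k` is odd and at most `N`. -/
def DAdj (k N : ℕ) (u v : ZMod k) : Prop := Odd (cdist k u v) ∧ cdist k u v ≤ N

lemma cdist_of_int (k : ℕ) (d : ℤ) (u v : ZMod k) (h : v - u = (d : ZMod k))
    (h1 : 0 < d.natAbs) (h2 : 2 * d.natAbs < k) : cdist k u v = d.natAbs := by
  have hk : 0 < k := lt_of_le_of_lt (Nat.zero_le _) h2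
  haveI : NeZero k := ⟨hk.ne'⟩
  set m := d.natAbs with hm
  have hmk : m < k := by omega
  have hval1 : ((m : ZMod k)).val = m := by
    rw [ZMod.val_natCast, Nat.mod_eq_of_lt hmk]
  have hval2 : ((-(m : ℤ) : ℤ) : ZMod k).val = k - m := by
    have : ((-(m : ℤ) : ℤ) : ZMod k) = ((k - m : ℕ) : ZMod k) := by
      push_cast [Nat.cast_sub hmk.le]
      simp [ZMod.natCast_self]
    rw [this, ZMod.val_natCast, Nat.mod_eq_of_lt (by omega)]
  have huv : u - v = ((-d : ℤ) : ZMod k) := by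
    rw [← neg_sub, h]; push_cast; ring
  unfold cdist
  rcases le_or_gt 0 d with hd | hd
  · have hdm : d = (m : ℤ) := by simp only [hm]; omega
    rw [h, huv, hdm]
    push_cast
    rw [hval1]
    have : ((-(m : ℤ) : ℤ) : ZMod k).val = k - m := hval2
    push_cast at this
    rw [this]
    omega
  · have hdm : d = -(m : ℤ) := by simp only [hm]; omega
    rw [h, huv, hdm]
    have h3 : ((-(m : ℤ) : ℤ) : ZMod k).val = k - m := hval2
    have h4 : ((-(-(m : ℤ)) : ℤ) : ZMod k).val = m := by
      simp only [neg_neg]; push_cast; exact hval1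
    push_cast at h3 h4 ⊢
    rw [h3, h4]
    omega

/-- Let `k` be odd with `k ≥ 3N` for an odd `N`. For all integer coefficients `c₁,…,cₙ`
with `Σ|cᵢ| ≤ N` and `Σcᵢ` odd, the function `f'(x₁,…,xₙ) = (Σ cᵢ xᵢ) mod k` is a graph
homomorphism from `C_kⁿ` to `D_k`. -/
theorem linear_mod_hom_to_Dk (k N : ℕ) (hkodd : Odd k) (hNodd : Odd N)
    (hNk : 3 * N ≤ k) (n : ℕ) (c : Fin n → ℤ)
    (hc : (∑ i, |c i|) ≤ (N : ℤ)) (hcodd : Odd (∑ i, c i))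
    (x y : Fin n → ZMod k) (hxy : ∀ i, CycAdj k (x i) (y i)) :
    DAdj k N (∑ i, (c i : ZMod k) * x i) (∑ i, (c i : ZMod k) * y i) := by
  have hN1 : 1 ≤ N := hNodd.pos
  have hk3 : 3 ≤ k := le_trans (by omega) hNk
  set s : Fin n → ℤ := fun i => if y i = x i + 1 then 1 else -1 with hs
  have hys : ∀ i, y i - x i = ((s i : ℤ) : ZMod k) := by
    intro i
    by_cases h : y i = x i + 1
    · simp [hs, h]
    · rcases hxy i with h1 | h1
      · exact absurd h1 h
      · simp only [hs, if_neg h, h1]; push_cast; ring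
  set d : ℤ := ∑ i, c i * s i with hd
  have hdiff : (∑ i, (c i : ZMod k) * y i) - (∑ i, (c i : ZMod k) * x i) = (d : ZMod k) := by
    rw [← Finset.sum_sub_distrib, hd]
    push_cast
    apply Finset.sum_congr rfl
    intro i _
    rw [← mul_sub, hys i]
  have hdabs : |d| ≤ (N : ℤ) := by
    calc |d| ≤ ∑ i, |c i * s i| := Finset.abs_sum_le_sum_abs _ _
    _ = ∑ i, |c i| := by
        apply Finset.sum_congr rfl
        intro i _
        rw [abs_mul]
        have : |s i| = 1 := by by_cases h : y i = x i + 1 <;> simp [hs, h]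
        rw [this, mul_one]
    _ ≤ (N : ℤ) := hc
  have hdodd : Odd d := by
    have heven : Even (d - ∑ i, c i) := by
      rw [hd, ← Finset.sum_sub_distrib]
      apply Finset.even_sum
      intro i _
      have : c i * s i - c i = c i * (s i - 1) := by ring
      rw [this]
      apply Even.mul_left
      by_cases h : y i = x i + 1 <;> simp [hs, h]
    rcases Int.even_or_odd d with h | h
    · exfalso
      have := (Int.even_sub.mp heven).mp h
      exact (Int.not_odd_iff_even.mpr this) hcodd
    · exact h
  have hdpos : 0 < d.natAbs := by
    rcases hdodd with ⟨t, ht⟩; omega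
  have hdN : d.natAbs ≤ N := by
    rw [Int.abs_eq_natAbs] at hdabs
    exact_mod_cast hdabs
  have h2 : 2 * d.natAbs < k := by omega
  have hcd := cdist_of_int k d _ _ hdiff hdpos h2
  exact ⟨by rw [hcd]; exact Int.natAbs_odd.mpr hdodd, by rw [hcd]; exact hdN⟩
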